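/- arXiv:0802.1982 — 2 statements merged into one kernel-verified Lean document; each statement's English description precedes it below -/
import Mathlib

section
/- For any n, Σ_{k=0}^{n} C(n,k) 2^{k(n−k)} R_k is divisible-compatible so that (Σ_{k=0}^{n} C(n,k) 2^{k(n−k)} R_k) · Π_{i=0}^{n−1} (2^n − 2^i) is divisible by 2^n · n!, where R_k is the number of k×k matrices over ℤ/2 all of whose principal minors are 1. -/
open Matrix

/-- The principal minor of `A` indexed by the subset `s` (rows and columns). -/
def pminor {m : Type*} [Fintype m] [DecidableEq m] {R : Type*} [CommRing R]
    (A : Matrix m m R) (s : Finset m) : R :=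
  (A.submatrix (fun i : s => (i : m)) (fun j : s => (j : m))).det

/-- `R k` = number of `k × k` matrices over `ZMod 2` all of whose principal minors are 1. -/
noncomputable def numPM (k : ℕ) : ℕ :=
  Nat.card {A : Matrix (Fin k) (Fin k) (ZMod 2) // ∀ s : Finset (Fin k), pminor A s = 1}

section PminorLemmas

variable {m : Type*} [Fintype m] [DecidableEq m] {R : Type*} [CommRing R]

lemma pminor_transpose (A : Matrix m m R) (s : Finset m) : pminor Aᵀ s = pminor A s := by
  unfold pminor
  rw [← Matrix.det_transpose (A.submatrix _ _)]
  congr 1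

lemma pminor_empty (A : Matrix m m R) : pminor A (∅ : Finset m) = 1 := by
  haveI : IsEmpty ((∅ : Finset m) : Finset m) := ⟨fun x => absurd x.2 (Finset.notMem_empty _)⟩
  exact Matrix.det_isEmpty

lemma pminor_one (s : Finset m) : pminor (1 : Matrix m m R) s = 1 := by
  unfold pminor
  rw [Matrix.submatrix_one _ Subtype.coe_injective, Matrix.det_one]

lemma pminor_singleton (A : Matrix m m R) (i : m) : pminor A ({i} : Finset m) = A i i := by
  unfold pminor
  let e : Fin 1 ≃ (({i} : Finset m) : Finset m) :=
    { toFun := fun _ => ⟨i, Finset.mem_singleton_self i⟩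
      invFun := fun _ => 0
      left_inv := fun x => Subsingleton.elim _ _
      right_inv := fun y => Subtype.ext (Finset.mem_singleton.mp y.2).symm }
  rw [← Matrix.det_submatrix_equiv_self e, Matrix.submatrix_submatrix, Matrix.det_fin_one]
  rfl

lemma pminor_pair (A : Matrix m m R) {i j : m} (h : i ≠ j) :
    pminor A ({i, j} : Finset m) = A i i * A j j - A i j * A j i := by
  unfold pminor
  have hi : i ∈ ({i, j} : Finset m) := by simp
  have hj : j ∈ ({i, j} : Finset m) := by simp
  let e : Fin 2 ≃ (({i, j} : Finset m) : Finset m) :=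
    { toFun := fun x => if x = 0 then ⟨i, hi⟩ else ⟨j, hj⟩
      invFun := fun y => if (y : m) = i then 0 else 1
      left_inv := fun x => by
        fin_cases x <;> simp [h.symm]
      right_inv := fun y => by
        rcases Finset.mem_insert.mp y.2 with h1 | h1
        · simp [h1]
          exact Subtype.ext h1.symm
        · have h1 : (y : m) = j := Finset.mem_singleton.mp h1
          simp [h1, h.symm]
          exact Subtype.ext h1.symm }
  rw [← Matrix.det_submatrix_equiv_self e, Matrix.submatrix_submatrix, Matrix.det_fin_two]
  simp [e, Function.comp, h.symm]

end PminorLemmas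

lemma numPM_odd (k : ℕ) : Odd (numPM k) := by
  classical
  haveI : Fact (Nat.Prime 2) := ⟨Nat.prime_two⟩
  let T := {A : Matrix (Fin k) (Fin k) (ZMod 2) // ∀ s : Finset (Fin k), pminor A s = 1}
  let f : Function.End T := fun A => ⟨(A.1)ᵀ, fun s => (pminor_transpose A.1 s).trans (A.2 s)⟩
  have hf : f ^ 2 ^ 1 = 1 := by
    funext A
    show f (f A) = A
    exact Subtype.ext (Matrix.transpose_transpose A.1)
  have hmod : Fintype.card T ≡ Fintype.card f.fixedPoints [MOD 2] :=
    Equiv.Perm.card_fixedPoints_modEq (f := f) (p := 2) (n := 1) hf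
  have hone : ∀ s : Finset (Fin k), pminor (1 : Matrix (Fin k) (Fin k) (ZMod 2)) s = 1 :=
    fun s => pminor_one s
  have hcard : Fintype.card f.fixedPoints = 1 := by
    rw [Fintype.card_eq_one_iff]
    refine ⟨⟨⟨1, hone⟩, Subtype.ext (Matrix.transpose_one)⟩, ?_⟩
    rintro ⟨⟨A, hA⟩, hfix⟩
    have hsym : Aᵀ = A := congrArg Subtype.val hfix
    ext : 2
    show A = 1
    ext i j
    by_cases hij : i = j
    · subst hij
      have := hA {i}
      rw [pminor_singleton] at this
      simp [this]
    · have h2 := hA {i, j}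
      rw [pminor_pair A hij] at h2
      have hii := hA {i}
      have hjj := hA {j}
      rw [pminor_singleton] at hii hjj
      have hji : A j i = A i j := by
        conv_rhs => rw [← hsym, Matrix.transpose_apply]
      rw [hii, hjj, hji, one_mul] at h2
      have hx : A i j * A i j = 0 := by
        have := sub_eq_self.mp h2
        exact this
      have : A i j = 0 := by
        have h01 : A i j = 0 ∨ A i j = 1 := by
          rcases A i j with ⟨v, hv⟩
          interval_cases v
          · exact Or.inl rfl
          · exact Or.inr rfl
        rcases h01 with h | h
        · exact h
        · rw [h] at hx; simp at hx
      simp [this, Matrix.one_apply_ne hij]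
  rw [hcard] at hmod
  have : numPM k % 2 = 1 := by
    have : numPM k = Fintype.card T := Nat.card_eq_fintype_card
    rw [this]
    exact hmod
  exact Nat.odd_iff.mpr this

lemma numPM_zero : numPM 0 = 1 := by
  haveI : Unique {A : Matrix (Fin 0) (Fin 0) (ZMod 2) // ∀ s : Finset (Fin 0), pminor A s = 1} := by
    refine ⟨⟨⟨1, fun s => ?_⟩⟩, fun A => Subtype.ext ?_⟩
    · have hs : s = ∅ := Subsingleton.elim _ _
      rw [hs]; exact pminor_empty _
    · ext i j; exact i.elim0
  exact Nat.card_unique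

lemma numPM_two : numPM 2 = 3 := by
  classical
  have key : ∀ s : Finset (Fin 2), s = ∅ ∨ s = {0} ∨ s = {1} ∨ s = {0, 1} := by decide
  let e : {A : Matrix (Fin 2) (Fin 2) (ZMod 2) // ∀ s : Finset (Fin 2), pminor A s = 1} ≃
      {p : ZMod 2 × ZMod 2 // p.1 * p.2 = 0} :=
    { toFun := fun A => ⟨(A.1 0 1, A.1 1 0), by
        have h2 := A.2 {0, 1}
        rw [pminor_pair A.1 (show (0 : Fin 2) ≠ 1 by decide)] at h2
        have h0 := A.2 {0}; have h1 := A.2 {1}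
        rw [pminor_singleton] at h0 h1
        rw [h0, h1, one_mul] at h2
        exact sub_eq_self.mp h2⟩
      invFun := fun p => ⟨!![1, p.1.1; p.1.2, 1], by
        intro s
        rcases key s with rfl | rfl | rfl | rfl
        · exact pminor_empty _
        · rw [pminor_singleton]; rfl
        · rw [pminor_singleton]; rfl
        · rw [pminor_pair _ (show (0 : Fin 2) ≠ 1 by decide)]
          have hp := p.2
          simp [hp]⟩
      left_inv := fun A => by
        apply Subtype.ext
        have h0 := A.2 {0}; have h1 := A.2 {1}
        rw [pminor_singleton] at h0 h1
        ext i j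
        fin_cases i <;> fin_cases j <;> simp [h0, h1]
      right_inv := fun p => by
        apply Subtype.ext
        apply Prod.ext <;> simp }
  unfold numPM
  rw [Nat.card_congr e, Nat.card_eq_fintype_card]
  decide

/-- The monoid hom sending a permutation to the corresponding element of `GL` over `ZMod 2`. -/
def permGL (n : ℕ) : Equiv.Perm (Fin n) →* GL (Fin n) (ZMod 2) where
  toFun σ :=
    { val := (σ⁻¹).toPEquiv.toMatrix
      inv := σ.toPEquiv.toMatrix
      val_inv := by
        rw [← PEquiv.toMatrix_trans, ← Equiv.toPEquiv_trans]
        simp [Equiv.Perm.inv_def, Equiv.Perm.one_def, Equiv.toPEquiv_refl, PEquiv.toMatrix_refl]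
      inv_val := by
        rw [← PEquiv.toMatrix_trans, ← Equiv.toPEquiv_trans]
        simp [Equiv.Perm.inv_def, Equiv.Perm.one_def, Equiv.toPEquiv_refl, PEquiv.toMatrix_refl] }
  map_one' := by
    ext : 1
    simp [Equiv.Perm.inv_def, Equiv.Perm.one_def, Equiv.toPEquiv_refl, PEquiv.toMatrix_refl]
  map_mul' := fun σ τ => by
    ext : 1
    show ((σ * τ)⁻¹).toPEquiv.toMatrix = (σ⁻¹).toPEquiv.toMatrix * (τ⁻¹).toPEquiv.toMatrix
    rw [← PEquiv.toMatrix_trans, ← Equiv.toPEquiv_trans]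
    congr 1

lemma permGL_injective (n : ℕ) : Function.Injective (permGL n) := by
  intro σ τ h
  have hm : (σ⁻¹).toPEquiv.toMatrix (α := ZMod 2) = (τ⁻¹).toPEquiv.toMatrix :=
    congrArg Units.val h
  have : σ⁻¹ = τ⁻¹ := by
    ext x
    by_contra hne
    have h2 := congrFun (congrFun hm x) (σ⁻¹ x)
    rw [PEquiv.toMatrix_apply, PEquiv.toMatrix_apply, Equiv.toPEquiv_apply,
      Equiv.toPEquiv_apply] at h2
    simp only [Option.mem_some_iff] at h2
    rw [if_pos trivial, if_neg (fun hc : τ⁻¹ x = σ⁻¹ x => hne (by rw [hc]))] at h2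
    exact one_ne_zero h2
  exact inv_injective this

lemma fact_dvd_prod (n : ℕ) : n.factorial ∣ ∏ i ∈ Finset.range n, (2 ^ n - 2 ^ i) := by
  have hGL : Nat.card (GL (Fin n) (ZMod 2)) = ∏ i ∈ Finset.range n, (2 ^ n - 2 ^ i) := by
    have h := Matrix.card_GL_field (𝔽 := ZMod 2) (n := n)
    rw [ZMod.card] at h
    rw [h]
    exact Fin.prod_univ_eq_prod_range (fun i => 2 ^ n - 2 ^ i) n
  have hdvd := Subgroup.card_dvd_of_injective (permGL n) (permGL_injective n)
  rwa [Nat.card_eq_fintype_card, Fintype.card_perm, Fintype.card_fin, hGL] at hdvd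

lemma pow_dvd_prod (n : ℕ) :
    2 ^ (∑ i ∈ Finset.range n, i) ∣ ∏ i ∈ Finset.range n, (2 ^ n - 2 ^ i) := by
  rw [← Finset.prod_pow_eq_pow_sum]
  refine Finset.prod_dvd_prod_of_dvd _ _ (fun i hi => ?_)
  exact Nat.dvd_sub (pow_dvd_pow 2 (le_of_lt (Finset.mem_range.mp hi))) dvd_rfl

lemma big_dvd (n : ℕ) (hn : 5 ≤ n) :
    2 ^ n * n.factorial ∣ ∏ i ∈ Finset.range n, (2 ^ n - 2 ^ i) := by
  haveI : Fact (Nat.Prime 2) := ⟨Nat.prime_two⟩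
  set v := (n.factorial).factorization 2 with hv
  set m := n.factorial / 2 ^ v with hm
  have hfac : 2 ^ v * m = n.factorial := Nat.ordProj_mul_ordCompl_eq_self n.factorial 2
  have hodd : ¬ 2 ∣ m := Nat.not_dvd_ordCompl Nat.prime_two n.factorial_ne_zero
  have hvn : v ≤ n := by
    have hleg := sub_one_mul_padicValNat_factorial (p := 2) n
    have : v = padicValNat 2 n.factorial :=
      Nat.factorization_def n.factorial Nat.prime_two
    omega
  have hsum : n + v ≤ ∑ i ∈ Finset.range n, i := by
    have h2 : (∑ i ∈ Finset.range n, i) * 2 = n * (n - 1) := Finset.sum_range_id_mul_two n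
    have h3 : n * 4 ≤ n * (n - 1) := Nat.mul_le_mul_left n (by omega)
    omega
  have hpow : 2 ^ (n + v) ∣ ∏ i ∈ Finset.range n, (2 ^ n - 2 ^ i) :=
    dvd_trans (pow_dvd_pow 2 hsum) (pow_dvd_prod n)
  have hmdvd : m ∣ ∏ i ∈ Finset.range n, (2 ^ n - 2 ^ i) :=
    dvd_trans (Nat.ordCompl_dvd n.factorial 2) (fact_dvd_prod n)
  have hcop : Nat.Coprime (2 ^ (n + v)) m :=
    Nat.Coprime.pow_left _ ((Nat.Prime.coprime_iff_not_dvd Nat.prime_two).mpr hodd)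
  have : 2 ^ (n + v) * m ∣ ∏ i ∈ Finset.range n, (2 ^ n - 2 ^ i) :=
    hcop.mul_dvd_of_dvd_of_dvd hpow hmdvd
  calc 2 ^ n * n.factorial = 2 ^ (n + v) * m := by rw [pow_add, mul_assoc, hfac]
  _ ∣ _ := this

theorem stmt_12 (n : ℕ) :
    (2 ^ n * n.factorial) ∣
      (∑ k ∈ Finset.range (n + 1), n.choose k * 2 ^ (k * (n - k)) * numPM k) *
        ∏ i ∈ Finset.range n, (2 ^ n - 2 ^ i) := by
  rcases Nat.lt_or_ge n 5 with hn | hn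
  · obtain ⟨a, ha⟩ := numPM_odd 0
    obtain ⟨b, hb⟩ := numPM_odd 1
    obtain ⟨c, hc⟩ := numPM_odd 3
    obtain ⟨d, hd⟩ := numPM_odd 4
    interval_cases n <;>
      norm_num [Finset.sum_range_succ, Finset.prod_range_succ, numPM_zero, numPM_two,
        Nat.factorial, Nat.choose] <;>
      omega
  · exact Dvd.dvd.mul_left (big_dvd n hn) _
end

section
/- The number of orbits of the conjugation action of Sₙ (via permutation matrices) on the set M(n) of n×n ℤ/2-matrices with all principal minors equal to 1 equals the number of isomorphism classes of acyclic digraphs on n vertices. -/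
open Matrix

/-- Adjacency matrix over `ZMod 2` of a digraph on `n` labeled vertices. -/
def adjMat {n : ℕ} (G : Fin n → Fin n → Bool) : Matrix (Fin n) (Fin n) (ZMod 2) :=
  Matrix.of fun i j => if G i j then 1 else 0

/-- A digraph is acyclic if it has no directed cycle (of any length). -/
def IsAcyclicDigraph {n : ℕ} (G : Fin n → Fin n → Bool) : Prop :=
  ∀ i, ¬ Relation.TransGen (fun a b => G a b = true) i i

/-! ### Auxiliary lemmas -/

lemma zmod2_cases (x : ZMod 2) : x = 0 ∨ x = 1 := by revert x; decide

lemma pminor_singleton_s14 {n : ℕ} (A : Matrix (Fin n) (Fin n) (ZMod 2)) (i : Fin n) :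
    pminor A {i} = A i i := by
  letI : Unique (({i} : Finset (Fin n)) : Type) :=
    ⟨⟨⟨i, Finset.mem_singleton_self i⟩⟩, by
      rintro ⟨x, hx⟩; apply Subtype.ext; simpa using hx⟩
  rw [pminor, Matrix.det_unique]
  rfl

lemma exists_sink {α : Type*} {r : α → α → Prop} (hirr : ∀ a, ¬ r a a)
    (htr : ∀ a b c, r a b → r b c → r a c) :
    ∀ s : Finset α, s.Nonempty → ∃ v ∈ s, ∀ w ∈ s, ¬ r v w := by
  classical
  intro s
  induction s using Finset.strongInduction with
  | _ s ih =>
    intro ⟨v, hv⟩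
    by_cases h : ∃ w ∈ s, r v w
    · set t := s.filter (fun w => r v w) with ht
      have htne : t.Nonempty := by
        obtain ⟨w, hw, hrw⟩ := h
        exact ⟨w, Finset.mem_filter.2 ⟨hw, hrw⟩⟩
      have hss : t ⊂ s := by
        refine Finset.ssubset_iff_of_subset (Finset.filter_subset _ _) |>.2 ?_
        exact ⟨v, hv, fun hvt => hirr v (Finset.mem_filter.1 hvt).2⟩
      obtain ⟨u, hu, hmax⟩ := ih t hss htne
      refine ⟨u, (Finset.filter_subset _ _) hu, fun w hw hrw => ?_⟩
      exact hmax w (Finset.mem_filter.2 ⟨hw, htr _ _ _ (Finset.mem_filter.1 hu).2 hrw⟩) hrw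
    · exact ⟨v, hv, fun w hw hrw => h ⟨w, hw, hrw⟩⟩

lemma det_key : ∀ (m : ℕ) (M : Matrix (Fin m) (Fin m) (ZMod 2))
    (r : Fin m → Fin m → Prop), (∀ a, ¬ r a a) → (∀ a b c, r a b → r b c → r a c) →
    (∀ i, M i i = 1) → (∀ i j, i ≠ j → M i j ≠ 0 → r i j) → M.det = 1 := by
  intro m
  induction m with
  | zero => intro M r _ _ _ _; simp [Matrix.det_fin_zero]
  | succ k ih =>
    intro M r hirr htr hdiag hoff
    obtain ⟨v, -, hv⟩ := exists_sink hirr htr Finset.univ ⟨0, Finset.mem_univ 0⟩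
    have hrow : ∀ j, j ≠ v → M v j = 0 := by
      intro j hj
      by_contra h
      exact hv j (Finset.mem_univ j) (hoff v j (Ne.symm hj) h)
    rw [Matrix.det_succ_row M v]
    rw [Finset.sum_eq_single v]
    · have h1 : ((-1 : ZMod 2) ^ ((v : ℕ) + (v : ℕ))) = 1 := by
        have : (-1 : ZMod 2) = 1 := by decide
        simp [this]
      rw [h1, hdiag v, one_mul, one_mul]
      apply ih _ (fun i j => r (v.succAbove i) (v.succAbove j))
      · intro a; exact hirr _
      · intro a b c hab hbc; exact htr _ _ _ hab hbc
      · intro i; exact hdiag _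
      · intro i j hij hne
        exact hoff _ _ (fun hc => hij (Fin.succAbove_right_injective hc)) hne
    · intro j _ hj
      rw [hrow j hj, mul_zero, zero_mul]
    · intro h; exact absurd (Finset.mem_univ v) h

lemma pminor_acyclic {n : ℕ} (G : Fin n → Fin n → Bool) (hl : ∀ i, G i i = false)
    (ha : IsAcyclicDigraph G) (s : Finset (Fin n)) : pminor (1 + adjMat G) s = 1 := by
  classical
  let e : Fin s.card ≃ {x // x ∈ s} := (s.orderIsoOfFin rfl).toEquiv
  have : pminor (1 + adjMat G) s =
      (((1 + adjMat G).submatrix (fun i : s => (i : Fin n))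
        (fun j : s => (j : Fin n))).submatrix e e).det := by
    rw [Matrix.det_submatrix_equiv_self]; rfl
  rw [this, Matrix.submatrix_submatrix]
  apply det_key _ _
    (fun i j => Relation.TransGen (fun a b => G a b = true) (e i : Fin n) (e j : Fin n))
  · intro a; exact ha _
  · intro a b c hab hbc; exact hab.trans hbc
  · intro i
    simp [adjMat, hl]
  · intro i j hij hne
    have hne' : ((e i : Fin n)) ≠ (e j : Fin n) := by
      intro hc
      exact hij (e.injective (Subtype.coe_injective hc))
    apply Relation.TransGen.single
    by_contra hG
    simp only [Bool.not_eq_true] at hG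
    apply hne
    simp [adjMat, hG, Matrix.one_apply, hne']

lemma chain_append_last {α : Type*} {R : α → α → Prop} :
    ∀ (a : α) (l : List α), List.Chain R a l →
      ∀ c, R (List.getLast (a :: l) (List.cons_ne_nil a l)) c → List.Chain R a (l ++ [c]) := by
  intro a l
  induction l generalizing a with
  | nil => intro _ c hc; exact List.Chain.cons hc List.Chain.nil
  | cons x l' ih =>
    intro h c hc
    rcases List.chain_cons.1 h with ⟨hax, hx⟩
    exact List.Chain.cons hax (ih x hx c (by rwa [List.getLast_cons_cons] at hc))

lemma cycle_rotate {α : Type*} {E : α → α → Prop} {v p : α} {l : List α}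
    (h : List.Chain E v (l ++ [v])) (hp : p ∈ v :: l) :
    ∃ m : List α, List.Chain E p (m ++ [p]) ∧ m.length = l.length ∧ (v :: l).Perm (p :: m) := by
  rcases List.mem_cons.1 hp with rfl | hp
  · exact ⟨l, h, rfl, List.Perm.refl _⟩
  · obtain ⟨l1, l2, rfl⟩ := List.append_of_mem hp
    have h' : List.Chain E v (l1 ++ p :: (l2 ++ [v])) := by
      simpa [List.append_assoc] using h
    rcases (List.isChain_split (l₁ := v :: l1)).1 h' with ⟨c1, c2⟩
    refine ⟨l2 ++ v :: l1, ?_, by simp; omega, ?_⟩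
    · have : List.Chain E p (l2 ++ v :: (l1 ++ [p])) := (List.isChain_split (l₁ := p :: l2)).2 ⟨c2, c1⟩
      simpa [List.append_assoc] using this
    · have : ((v :: l1) ++ (p :: l2)).Perm ((p :: l2) ++ (v :: l1)) := List.perm_append_comm
      simpa using this

/-- From any cycle, extract a vertex set where every vertex has a unique out-neighbor. -/
lemma cycle_structure {α : Type*} [DecidableEq α] {E : α → α → Prop}
    (hirr : ∀ a, ¬ E a a) {v0 : α} {l0 : List α} (h0 : List.Chain E v0 (l0 ++ [v0])) :
    ∃ S : Finset α, S.Nonempty ∧ ∀ p ∈ S, ∃ w ∈ S, E p w ∧ ∀ q ∈ S, E p q → q = w := by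
  classical
  set K : Set ℕ := {k | ∃ (v : α) (l : List α), l.length = k ∧ List.Chain E v (l ++ [v])} with hK
  have hKne : K.Nonempty := ⟨l0.length, v0, l0, rfl, h0⟩
  obtain ⟨v, l, hlen, hc⟩ := Nat.sInf_mem hKne
  have hmin : ∀ (v' : α) (l' : List α), List.Chain E v' (l' ++ [v']) →
      l.length ≤ l'.length := by
    intro v' l' hc'
    rw [hlen]
    exact Nat.sInf_le ⟨v', l', rfl, hc'⟩
  refine ⟨(v :: l).toFinset, ⟨v, by simp⟩, ?_⟩
  intro p hp
  have hp' : p ∈ v :: l := by simpa using hp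
  obtain ⟨m, hcm, hlm, hperm⟩ := cycle_rotate hc hp'
  have hSet : (v :: l).toFinset = (p :: m).toFinset := List.toFinset_eq_of_perm _ _ hperm
  cases m with
  | nil => exact absurd ((List.isChain_pair.1 hcm)) (hirr p)
  | cons w m' =>
    have hcm' := List.chain_cons.1 hcm
    refine ⟨w, ?_, hcm'.1, ?_⟩
    · rw [hSet]; simp
    · intro q hq hpq
      by_contra hqw
      have hqp : q ≠ p := fun hc => hirr p (hc ▸ hpq)
      have hq' : q ∈ m' := by
        rw [hSet] at hq
        simp at hq
        rcases hq with rfl | rfl | hq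
        · exact absurd rfl hqp
        · exact absurd rfl hqw
        · exact hq
      obtain ⟨m1, m2, rfl⟩ := List.append_of_mem hq'
      have hsplit : List.Chain E p ((w :: m1) ++ q :: (m2 ++ [p])) := by
        simpa [List.append_assoc] using hcm
      rcases (List.isChain_split (l₁ := p :: w :: m1)).1 hsplit with ⟨-, c2⟩
      have hnew : List.Chain E p ((q :: m2) ++ [p]) := List.chain_cons.2 ⟨hpq, c2⟩
      have := hmin p (q :: m2) hnew
      rw [← hlm] at this
      simp at this
      omega

lemma no_cycle {n : ℕ} (A : Matrix (Fin n) (Fin n) (ZMod 2))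
    (hA : ∀ s : Finset (Fin n), pminor A s = 1)
    (i : Fin n) (h : Relation.TransGen (fun a b => a ≠ b ∧ A a b = 1) i i) : False := by
  classical
  set E := fun a b : Fin n => a ≠ b ∧ A a b = 1 with hE
  have hirr : ∀ a, ¬ E a a := fun a ha => ha.1 rfl
  obtain ⟨b, hrt, hb⟩ := Relation.TransGen.tail'_iff.1 h
  obtain ⟨l, hcl, hlast⟩ := List.exists_isChain_cons_of_relationReflTransGen hrt
  have hcyc : List.Chain E i (l ++ [i]) :=
    chain_append_last i l hcl i (by rw [hlast]; exact hb)
  obtain ⟨S, ⟨v, hv⟩, hstruct⟩ := cycle_structure hirr hcyc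
  set M := A.submatrix (fun p : S => (p : Fin n)) (fun q : S => (q : Fin n)) with hM
  have hdet : M.det = 1 := hA S
  have hunit : IsUnit M.det := hdet ▸ isUnit_one
  have hones : M.mulVec (fun _ => 1) = 0 := by
    funext p
    obtain ⟨p, hp⟩ := p
    obtain ⟨w, hw, hEw, huniq⟩ := hstruct p hp
    have hwp : w ≠ p := fun hc => hirr p (by rw [← hc] at hEw ⊢; exact hEw)
    have hdiag : A p p = 1 := by rw [← pminor_singleton_s14 A p]; exact hA {p}
    have key : ∀ q ∈ S, A p q = (if q = p then 1 else 0) + (if q = w then 1 else 0) := by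
      intro q hq
      by_cases hqp : q = p
      · subst hqp
        simp [hdiag, Ne.symm hwp]
      · by_cases hqw : q = w
        · subst hqw
          simp [hqp, hEw.2]
        · rcases zmod2_cases (A p q) with h0 | h1
          · simp [h0, hqp, hqw]
          · exact absurd (huniq q hq ⟨Ne.symm hqp, h1⟩) hqw
    have : (M.mulVec (fun _ => 1)) ⟨p, hp⟩ = ∑ q ∈ S, A p q := by
      simp only [Matrix.mulVec, dotProduct, mul_one]
      rw [← Finset.sum_coe_sort S (fun q => A p q)]
      rfl
    rw [this, Finset.sum_congr rfl key, Finset.sum_add_distrib,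
      Finset.sum_ite_eq' S p (fun _ => (1 : ZMod 2)),
      Finset.sum_ite_eq' S w (fun _ => (1 : ZMod 2)), if_pos hp, if_pos hw]
    simp only [Pi.zero_apply]
    decide
  have h1 : (fun _ : S => (1 : ZMod 2)) = 0 := by
    calc (fun _ : S => (1 : ZMod 2)) = (1 : Matrix S S (ZMod 2)).mulVec (fun _ => 1) :=
          (Matrix.one_mulVec _).symm
      _ = (M⁻¹ * M).mulVec (fun _ => 1) := by rw [Matrix.nonsing_inv_mul M hunit]
      _ = M⁻¹.mulVec (M.mulVec (fun _ => 1)) := (Matrix.mulVec_mulVec _ _ _).symm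
      _ = M⁻¹.mulVec 0 := by rw [hones]
      _ = 0 := Matrix.mulVec_zero _
  have h2 := congrFun h1 ⟨v, hv⟩
  simp at h2

lemma conj_entry {n : ℕ} (A : Matrix (Fin n) (Fin n) (ZMod 2)) (μ : Equiv.Perm (Fin n)) :
    (μ.permMatrix (ZMod 2))⁻¹ * A * μ.permMatrix (ZMod 2) =
      A.submatrix (μ⁻¹ : Equiv.Perm (Fin n)) (μ⁻¹ : Equiv.Perm (Fin n)) := by
  have hinv : (μ.permMatrix (ZMod 2))⁻¹ = (μ⁻¹).permMatrix (ZMod 2) := by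
    apply Matrix.inv_eq_right_inv
    rw [Equiv.Perm.permMatrix, Equiv.Perm.permMatrix, PEquiv.toMatrix_toPEquiv_mul]
    ext i j
    simp [Matrix.one_apply]
  rw [hinv, Equiv.Perm.permMatrix, Equiv.Perm.permMatrix, PEquiv.toMatrix_toPEquiv_mul,
    PEquiv.mul_toMatrix_toPEquiv]
  ext i j
  simp

/-- The digraph associated to a matrix. -/
def toG {n : ℕ} (A : Matrix (Fin n) (Fin n) (ZMod 2)) : Fin n → Fin n → Bool :=
  fun i j => decide (i ≠ j ∧ A i j = 1)

theorem stmt_14 {n : ℕ} :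
    Nat.card (Quot (fun A B : {A : Matrix (Fin n) (Fin n) (ZMod 2) //
          ∀ s : Finset (Fin n), pminor A s = 1} =>
        ∃ μ : Equiv.Perm (Fin n),
          B.1 = (μ.permMatrix (ZMod 2))⁻¹ * A.1 * μ.permMatrix (ZMod 2))) =
    Nat.card (Quot (fun G H : {G : Fin n → Fin n → Bool //
          (∀ i, G i i = false) ∧ IsAcyclicDigraph G} =>
        ∃ e : Equiv.Perm (Fin n), ∀ i j, G.1 i j = H.1 (e i) (e j))) := by
  classical
  set r1 := (fun A B : {A : Matrix (Fin n) (Fin n) (ZMod 2) //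
          ∀ s : Finset (Fin n), pminor A s = 1} =>
        ∃ μ : Equiv.Perm (Fin n),
          B.1 = (μ.permMatrix (ZMod 2))⁻¹ * A.1 * μ.permMatrix (ZMod 2)) with hr1
  set r2 := (fun G H : {G : Fin n → Fin n → Bool //
          (∀ i, G i i = false) ∧ IsAcyclicDigraph G} =>
        ∃ e : Equiv.Perm (Fin n), ∀ i j, G.1 i j = H.1 (e i) (e j)) with hr2
  -- the forward map on subtypes
  have hGdiag : ∀ (A : {A : Matrix (Fin n) (Fin n) (ZMod 2) //
      ∀ s : Finset (Fin n), pminor A s = 1}) i, toG A.1 i i = false := by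
    intro A i; simp [toG]
  have hGacyc : ∀ (A : {A : Matrix (Fin n) (Fin n) (ZMod 2) //
      ∀ s : Finset (Fin n), pminor A s = 1}), IsAcyclicDigraph (toG A.1) := by
    intro A i hcyc
    apply no_cycle A.1 A.2 i
    refine Relation.TransGen.mono ?_ _ _ hcyc
    intro a b hab
    exact of_decide_eq_true hab
  let f : {A : Matrix (Fin n) (Fin n) (ZMod 2) // ∀ s : Finset (Fin n), pminor A s = 1} →
      {G : Fin n → Fin n → Bool // (∀ i, G i i = false) ∧ IsAcyclicDigraph G} :=
    fun A => ⟨toG A.1, hGdiag A, hGacyc A⟩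
  let g : {G : Fin n → Fin n → Bool // (∀ i, G i i = false) ∧ IsAcyclicDigraph G} →
      {A : Matrix (Fin n) (Fin n) (ZMod 2) // ∀ s : Finset (Fin n), pminor A s = 1} :=
    fun G => ⟨1 + adjMat G.1, fun s => pminor_acyclic G.1 G.2.1 G.2.2 s⟩
  have hgf : ∀ A, g (f A) = A := by
    intro A
    apply Subtype.ext
    ext i j
    show (1 : Matrix (Fin n) (Fin n) (ZMod 2)) i j + adjMat (toG A.1) i j = A.1 i j
    by_cases hij : i = j
    · subst hij
      have : A.1 i i = 1 := by rw [← pminor_singleton_s14 A.1 i]; exact A.2 {i}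
      simp [adjMat, toG, Matrix.one_apply, this]
    · rcases zmod2_cases (A.1 i j) with h0 | h1
      · simp [adjMat, toG, Matrix.one_apply, hij, h0]
      · simp [adjMat, toG, Matrix.one_apply, hij, h1]
  have hfg : ∀ G, f (g G) = G := by
    intro G
    apply Subtype.ext
    funext i j
    show toG (1 + adjMat G.1) i j = G.1 i j
    by_cases hij : i = j
    · subst hij
      simp [toG, G.2.1 i]
    · cases hG : G.1 i j with
      | false => simp [toG, adjMat, Matrix.one_apply, hij, hG]
      | true => simp [toG, adjMat, Matrix.one_apply, hij, hG]
  have hf : ∀ A B, r1 A B → r2 (f A) (f B) := by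
    intro A B ⟨μ, hB⟩
    rw [conj_entry] at hB
    refine ⟨μ, fun i j => ?_⟩
    show toG A.1 i j = toG B.1 (μ i) (μ j)
    rw [hB]
    simp [toG, Matrix.submatrix_apply]
  have hg : ∀ G H, r2 G H → r1 (g G) (g H) := by
    intro G H ⟨e, hGH⟩
    refine ⟨e, ?_⟩
    rw [conj_entry]
    show (1 : Matrix (Fin n) (Fin n) (ZMod 2)) + adjMat H.1 =
      ((1 : Matrix (Fin n) (Fin n) (ZMod 2)) + adjMat G.1).submatrix
        (e⁻¹ : Equiv.Perm (Fin n)) (e⁻¹ : Equiv.Perm (Fin n))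
    ext i j
    have hH : H.1 i j = G.1 (e⁻¹ i) (e⁻¹ j) := by
      rw [hGH (e⁻¹ i) (e⁻¹ j)]
      simp
    simp only [Matrix.submatrix_apply, Matrix.add_apply, Matrix.one_apply, adjMat,
      Matrix.of_apply, hH]
    congr 1
    by_cases hij : i = j
    · subst hij; simp
    · rw [if_neg hij, if_neg (fun hc => hij (by simpa using congrArg e hc))]
  apply Nat.card_congr
  exact {
    toFun := Quot.map f hf
    invFun := Quot.map g hg
    left_inv := by
      intro q
      induction q using Quot.ind with
      | _ a => exact congrArg (Quot.mk r1) (hgf a)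
    right_inv := by
      intro q
      induction q using Quot.ind with
      | _ a => exact congrArg (Quot.mk r2) (hfg a) }
end
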